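/- arXiv:2310.02176 — 11 statements merged into one kernel-verified Lean document; each statement's English description precedes it below -/
import Mathlib

section
/- Let θ be a real 2×2 matrix, P an invertible real 2×2 matrix with Pθ = θP, and δ ∈ ℝ². Define ψ : ℝ × ℝ² → ℝ × ℝ² by ψ(t, v) = (t, Pv + Λ^θ_t δ). Then ψ is a bijection and for all (t₁, v₁), (t₂, v₂) ∈ ℝ × ℝ² it holds that ψ((t₁, v₁) · (t₂, v₂)) = ψ(t₁, v₁) · ψ(t₂, v₂), i.e., ψ is an automorphism of the group G(θ). -/
open Matrix

/-- `Λ^B_t v := ∫₀ᵗ e^{sB} v ds`. -/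
noncomputable def Lam (B : Matrix (Fin 2) (Fin 2) ℝ) (t : ℝ) (v : Fin 2 → ℝ) : Fin 2 → ℝ :=
  ∫ s in (0:ℝ)..t, (NormedSpace.exp (s • B)) *ᵥ v

/-- The product of the group `G(θ) = ℝ ×_ρ ℝ²`:
`(t₁, v₁) · (t₂, v₂) = (t₁ + t₂, v₁ + e^{t₁θ} v₂)`. -/
noncomputable def Gmul (θ : Matrix (Fin 2) (Fin 2) ℝ) (p q : ℝ × (Fin 2 → ℝ)) :
    ℝ × (Fin 2 → ℝ) :=
  (p.1 + q.1, p.2 + (NormedSpace.exp (p.1 • θ)) *ᵥ q.2)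

lemma exp_smul_continuous (θ : Matrix (Fin 2) (Fin 2) ℝ) :
    Continuous fun s : ℝ => NormedSpace.exp (s • θ) := by
  letI : SeminormedRing (Matrix (Fin 2) (Fin 2) ℝ) := Matrix.linftyOpSemiNormedRing
  letI : NormedRing (Matrix (Fin 2) (Fin 2) ℝ) := Matrix.linftyOpNormedRing
  letI : NormedAlgebra ℝ (Matrix (Fin 2) (Fin 2) ℝ) := Matrix.linftyOpNormedAlgebra
  letI : NormedAlgebra ℚ (Matrix (Fin 2) (Fin 2) ℝ) := .restrictScalars ℚ ℝ _
  exact NormedSpace.exp_continuous.comp (continuous_id.smul continuous_const)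

lemma integrand_continuous (θ : Matrix (Fin 2) (Fin 2) ℝ) (δ : Fin 2 → ℝ) :
    Continuous fun s : ℝ => (NormedSpace.exp (s • θ)) *ᵥ δ :=
  (exp_smul_continuous θ).matrix_mulVec continuous_const

lemma Lam_add (θ : Matrix (Fin 2) (Fin 2) ℝ) (δ : Fin 2 → ℝ) (t₁ t₂ : ℝ) :
    Lam θ (t₁ + t₂) δ = Lam θ t₁ δ + (NormedSpace.exp (t₁ • θ)) *ᵥ Lam θ t₂ δ := by
  have hc := integrand_continuous θ δ
  have hsplit : Lam θ t₁ δ + (∫ s in t₁..(t₁ + t₂), (NormedSpace.exp (s • θ)) *ᵥ δ)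
      = Lam θ (t₁ + t₂) δ := by
    exact intervalIntegral.integral_add_adjacent_intervals
      (hc.intervalIntegrable _ _) (hc.intervalIntegrable _ _)
  rw [← hsplit]
  congr 1
  have hshift : (∫ s in t₁..(t₁ + t₂), (NormedSpace.exp (s • θ)) *ᵥ δ)
      = ∫ u in (0:ℝ)..t₂, (NormedSpace.exp ((u + t₁) • θ)) *ᵥ δ := by
    rw [intervalIntegral.integral_comp_add_right (fun s => (NormedSpace.exp (s • θ)) *ᵥ δ) t₁]
    norm_num [add_comm]
  rw [hshift]
  have hmul : ∀ u : ℝ, (NormedSpace.exp ((u + t₁) • θ)) *ᵥ δ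
      = (NormedSpace.exp (t₁ • θ)) *ᵥ ((NormedSpace.exp (u • θ)) *ᵥ δ) := by
    intro u
    rw [Matrix.mulVec_mulVec]
    have : (u + t₁) • θ = t₁ • θ + u • θ := by
      rw [add_smul, add_comm]
    rw [this, Matrix.exp_add_of_commute]
    exact (Commute.refl θ).smul_left t₁ |>.smul_right u
  simp_rw [hmul]
  -- pull the constant matrix out of the integral
  let L : (Fin 2 → ℝ) →L[ℝ] (Fin 2 → ℝ) :=
    LinearMap.toContinuousLinearMap (Matrix.mulVecLin (NormedSpace.exp (t₁ • θ)))
  have hL : ∀ w, L w = (NormedSpace.exp (t₁ • θ)) *ᵥ w := fun w => rfl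
  calc (∫ u in (0:ℝ)..t₂, (NormedSpace.exp (t₁ • θ)) *ᵥ ((NormedSpace.exp (u • θ)) *ᵥ δ))
      = ∫ u in (0:ℝ)..t₂, L ((NormedSpace.exp (u • θ)) *ᵥ δ) := by simp_rw [hL]
    _ = L (∫ u in (0:ℝ)..t₂, (NormedSpace.exp (u • θ)) *ᵥ δ) :=
        L.intervalIntegral_comp_comm (hc.intervalIntegrable _ _)
    _ = (NormedSpace.exp (t₁ • θ)) *ᵥ Lam θ t₂ δ := by rw [hL]; rfl

/-- For `P` invertible commuting with `θ` and `δ ∈ ℝ²`, the map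
`ψ(t, v) = (t, Pv + Λ^θ_t δ)` is an automorphism of `G(θ)`. -/
theorem psi_is_automorphism (θ P : Matrix (Fin 2) (Fin 2) ℝ) (hP : IsUnit P)
    (hcomm : P * θ = θ * P) (δ : Fin 2 → ℝ)
    (ψ : ℝ × (Fin 2 → ℝ) → ℝ × (Fin 2 → ℝ))
    (hψ : ∀ t v, ψ (t, v) = (t, P *ᵥ v + Lam θ t δ)) :
    Function.Bijective ψ ∧ ∀ p q : ℝ × (Fin 2 → ℝ), ψ (Gmul θ p q) = Gmul θ (ψ p) (ψ q) := by
  haveI : Invertible P := hP.invertible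
  have hPexp : ∀ t : ℝ, P * NormedSpace.exp (t • θ) = NormedSpace.exp (t • θ) * P := by
    intro t
    exact ((Commute.smul_right (hcomm : Commute P θ) t).exp_right)
  constructor
  · constructor
    · rintro ⟨t₁, v₁⟩ ⟨t₂, v₂⟩ h
      rw [hψ, hψ] at h
      simp only [Prod.mk.injEq] at h
      obtain ⟨ht, hv⟩ := h
      subst ht
      have hv' : P *ᵥ v₁ = P *ᵥ v₂ := by
        have := add_right_cancel hv
        exact this
      have : ⅟P *ᵥ (P *ᵥ v₁) = ⅟P *ᵥ (P *ᵥ v₂) := by rw [hv']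
      rw [Matrix.mulVec_mulVec, Matrix.mulVec_mulVec, invOf_mul_self, Matrix.one_mulVec,
        Matrix.one_mulVec] at this
      rw [this]
    · rintro ⟨t, w⟩
      refine ⟨(t, ⅟P *ᵥ (w - Lam θ t δ)), ?_⟩
      rw [hψ]
      rw [Matrix.mulVec_mulVec, mul_invOf_self, Matrix.one_mulVec, sub_add_cancel]
  · rintro ⟨t₁, v₁⟩ ⟨t₂, v₂⟩
    simp only [Gmul, hψ]
    refine Prod.ext rfl ?_
    simp only
    rw [Lam_add, Matrix.mulVec_add, Matrix.mulVec_add, Matrix.mulVec_mulVec, hPexp,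
      ← Matrix.mulVec_mulVec]
    abel
end

section
/- Let A be a real 2×2 matrix, ξ, η ∈ ℝ² and α ∈ ℝ, and define the linear endomorphism D of ℝ × ℝ² by D(a, w) := (0, aξ + Aw). Then the linear span of the set { Dⁿ(α, η) : n ∈ ℕ } (with D⁰ = identity) equals all of ℝ × ℝ² if and only if α · ⟨A(αξ + Aη), R(αξ + Aη)⟩ ≠ 0. (This is the ad-rank condition for the one-input linear control system determined by the linear vector field (A, ξ) and the left-invariant vector field (α, η).) -/
open Matrix

/-- The counterclockwise rotation by `π/2` on `ℝ²`. -/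
def Rot : Matrix (Fin 2) (Fin 2) ℝ := !![0, -1; 1, 0]

set_option maxHeartbeats 1000000 in
/-- The ad-rank condition for the one-input linear control system determined by the
linear vector field `(A, ξ)` and the left-invariant vector field `(α, η)`: the span of
the orbit of `(α, η)` under the derivation `D(a, w) = (0, aξ + Aw)` is everything iff
`α⟨A(αξ + Aη), R(αξ + Aη)⟩ ≠ 0`. -/
theorem adrank_condition (A : Matrix (Fin 2) (Fin 2) ℝ) (ξ η : Fin 2 → ℝ) (α : ℝ)
    (D : ℝ × (Fin 2 → ℝ) → ℝ × (Fin 2 → ℝ))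
    (hD : ∀ a w, D (a, w) = ((0 : ℝ), a • ξ + A *ᵥ w)) :
    Submodule.span ℝ {x : ℝ × (Fin 2 → ℝ) | ∃ n : ℕ, D^[n] (α, η) = x} = ⊤ ↔
      α * ((A *ᵥ (α • ξ + A *ᵥ η)) ⬝ᵥ (Rot *ᵥ (α • ξ + A *ᵥ η))) ≠ 0 := by
  obtain ⟨v, hv⟩ : ∃ v : Fin 2 → ℝ, v = α • ξ + A *ᵥ η := ⟨_, rfl⟩
  have hRot : ∀ u : Fin 2 → ℝ, (A *ᵥ u) ⬝ᵥ (Rot *ᵥ u)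
      = u 0 * (A *ᵥ u) 1 - u 1 * (A *ᵥ u) 0 := by
    intro u
    simp [Rot, dotProduct, Matrix.mulVec, Fin.sum_univ_two, Matrix.vecHead, Matrix.vecTail]; ring
  rw [← hv, hRot v]
  have horbit : ∀ n : ℕ, D^[n + 1] (α, η) = (0, (A ^ n) *ᵥ v) := by
    intro n
    induction n with
    | zero => simp [hD, hv]
    | succ n ih =>
        rw [Function.iterate_succ_apply', ih, hD]
        simp only [zero_smul, zero_add, pow_succ', Matrix.mulVec_mulVec]
  have hCH : ∀ w : Fin 2 → ℝ, A *ᵥ (A *ᵥ w)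
      = (A 0 0 + A 1 1) • (A *ᵥ w) - (A 0 0 * A 1 1 - A 0 1 * A 1 0) • w := by
    intro w
    funext i
    fin_cases i <;> simp [Matrix.mulVec, dotProduct, Fin.sum_univ_two, Matrix.vecHead, Matrix.vecTail] <;> ring
  have hW : ∀ w ∈ Submodule.span ℝ ({v, A *ᵥ v} : Set (Fin 2 → ℝ)),
      A *ᵥ w ∈ Submodule.span ℝ ({v, A *ᵥ v} : Set (Fin 2 → ℝ)) := by
    intro w hw
    induction hw using Submodule.span_induction with
    | mem x hx =>
        rcases hx with rfl | hx
        · exact Submodule.subset_span (by right; rfl)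
        · rcases hx with rfl
          rw [hCH]
          exact Submodule.sub_mem _
            (Submodule.smul_mem _ _ (Submodule.subset_span (by right; rfl)))
            (Submodule.smul_mem _ _ (Submodule.subset_span (by left; rfl)))
    | zero => rw [Matrix.mulVec_zero]; exact Submodule.zero_mem _
    | add x y _ _ hx hy => rw [Matrix.mulVec_add]; exact Submodule.add_mem _ hx hy
    | smul c x _ hx => rw [Matrix.mulVec_smul]; exact Submodule.smul_mem _ _ hx
  have hpow : ∀ n : ℕ, (A ^ n) *ᵥ v ∈ Submodule.span ℝ ({v, A *ᵥ v} : Set (Fin 2 → ℝ)) := by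
    intro n
    induction n with
    | zero =>
        simpa using Submodule.subset_span (show v ∈ ({v, A *ᵥ v} : Set _) by left; rfl)
    | succ n ih =>
        have h : (A ^ (n + 1)) *ᵥ v = A *ᵥ ((A ^ n) *ᵥ v) := by
          rw [pow_succ', Matrix.mulVec_mulVec]
        rw [h]
        exact hW _ ih
  constructor
  · -- span = ⊤ → α * det ≠ 0
    intro hspan h0
    by_cases hα : α = 0
    · have hle : Submodule.span ℝ {x : ℝ × (Fin 2 → ℝ) | ∃ n : ℕ, D^[n] (α, η) = x}
          ≤ LinearMap.ker (LinearMap.fst ℝ ℝ (Fin 2 → ℝ)) := by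
        rw [Submodule.span_le]
        rintro x ⟨n, rfl⟩
        match n with
        | 0 => simp [hα]
        | n + 1 => rw [horbit]; simp
      rw [hspan] at hle
      have h1 : ((1 : ℝ), (0 : Fin 2 → ℝ)) ∈
          LinearMap.ker (LinearMap.fst ℝ ℝ (Fin 2 → ℝ)) := hle Submodule.mem_top
      simp at h1
    · have hdz : v 0 * (A *ᵥ v) 1 - v 1 * (A *ᵥ v) 0 = 0 := by
        rcases mul_eq_zero.mp h0 with h | h
        · exact absurd h hα
        · exact h
      by_cases hv0 : v = 0
      · -- v = 0 : use f (a,w) = α * w 0 - η 0 * a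
        set f : (ℝ × (Fin 2 → ℝ)) →ₗ[ℝ] ℝ :=
          α • ((LinearMap.proj 0 : (Fin 2 → ℝ) →ₗ[ℝ] ℝ).comp
            (LinearMap.snd ℝ ℝ (Fin 2 → ℝ))) - (η 0) • LinearMap.fst ℝ ℝ (Fin 2 → ℝ)
          with hf
        have hle : Submodule.span ℝ {x : ℝ × (Fin 2 → ℝ) | ∃ n : ℕ, D^[n] (α, η) = x}
            ≤ LinearMap.ker f := by
          rw [Submodule.span_le]
          rintro x ⟨n, rfl⟩
          match n with
          | 0 => simp [hf, mul_comm]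
          | n + 1 => rw [horbit]; simp [hf, hv0]
        rw [hspan] at hle
        have h1 : ((0 : ℝ), (![1, 0] : Fin 2 → ℝ)) ∈ LinearMap.ker f := hle Submodule.mem_top
        simp [hf] at h1
        exact hα h1
      · -- v ≠ 0 : use u = Rot v
        set g : (Fin 2 → ℝ) →ₗ[ℝ] ℝ :=
          (-(v 1)) • (LinearMap.proj 0 : (Fin 2 → ℝ) →ₗ[ℝ] ℝ) +
            (v 0) • (LinearMap.proj 1 : (Fin 2 → ℝ) →ₗ[ℝ] ℝ) with hg
        have hgspan : ∀ w ∈ Submodule.span ℝ ({v, A *ᵥ v} : Set (Fin 2 → ℝ)), g w = 0 := by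
          intro w hw
          have hker : Submodule.span ℝ ({v, A *ᵥ v} : Set (Fin 2 → ℝ)) ≤ LinearMap.ker g := by
            rw [Submodule.span_le]
            rintro x (rfl | rfl)
            · simp [hg]; ring
            · simp [hg]; simp [Matrix.mulVec, dotProduct, Fin.sum_univ_two] at hdz; linear_combination hdz
          exact hker hw
        set f : (ℝ × (Fin 2 → ℝ)) →ₗ[ℝ] ℝ :=
          α • (g.comp (LinearMap.snd ℝ ℝ (Fin 2 → ℝ))) -
            (g η) • LinearMap.fst ℝ ℝ (Fin 2 → ℝ) with hf
        have hle : Submodule.span ℝ {x : ℝ × (Fin 2 → ℝ) | ∃ n : ℕ, D^[n] (α, η) = x}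
            ≤ LinearMap.ker f := by
          rw [Submodule.span_le]
          rintro x ⟨n, rfl⟩
          match n with
          | 0 => simp [hf, mul_comm]
          | n + 1 =>
              rw [horbit]
              have := hgspan _ (hpow n)
              simp only [SetLike.mem_coe, LinearMap.mem_ker, hf, LinearMap.sub_apply, LinearMap.smul_apply, LinearMap.comp_apply,
                LinearMap.snd_apply, LinearMap.fst_apply, this, smul_eq_mul, mul_zero, sub_zero]
        rw [hspan] at hle
        have h1 : ((0 : ℝ), (![-(v 1), v 0] : Fin 2 → ℝ)) ∈ LinearMap.ker f :=
          hle Submodule.mem_top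
        simp [hf, hg] at h1
        rcases h1 with h1 | h1
        · exact hα h1
        · apply hv0
          have hv00 : v 0 = 0 := by nlinarith
          have hv11 : v 1 = 0 := by nlinarith
          funext i
          fin_cases i <;> simp [hv00, hv11]
  · -- α * det ≠ 0 → span = ⊤
    intro hne
    have hα : α ≠ 0 := fun h => hne (by rw [h]; ring)
    have hdz : v 0 * (A *ᵥ v) 1 - v 1 * (A *ᵥ v) 0 ≠ 0 := fun h => hne (by rw [h]; ring)
    rw [eq_top_iff]
    rintro ⟨a, w⟩ -
    have h1 : ((α, η) : ℝ × (Fin 2 → ℝ)) ∈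
        Submodule.span ℝ {x : ℝ × (Fin 2 → ℝ) | ∃ n : ℕ, D^[n] (α, η) = x} :=
      Submodule.subset_span ⟨0, rfl⟩
    have h2 : ((0 : ℝ), v) ∈
        Submodule.span ℝ {x : ℝ × (Fin 2 → ℝ) | ∃ n : ℕ, D^[n] (α, η) = x} :=
      Submodule.subset_span ⟨1, by simpa using horbit 0⟩
    have h3 : ((0 : ℝ), A *ᵥ v) ∈
        Submodule.span ℝ {x : ℝ × (Fin 2 → ℝ) | ∃ n : ℕ, D^[n] (α, η) = x} :=
      Submodule.subset_span ⟨2, by simpa using horbit 1⟩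
    have scalar : ∀ p0 p1 q0 q1 w0 w1 e0 e1 : ℝ, p0 * q1 - p1 * q0 ≠ 0 →
        w0 = a / α * e0 +
            ((w0 - a / α * e0) * q1 - (w1 - a / α * e1) * q0) / (p0 * q1 - p1 * q0) * p0 +
            (p0 * (w1 - a / α * e1) - p1 * (w0 - a / α * e0)) / (p0 * q1 - p1 * q0) * q0 ∧
          w1 = a / α * e1 +
            ((w0 - a / α * e0) * q1 - (w1 - a / α * e1) * q0) / (p0 * q1 - p1 * q0) * p1 +
            (p0 * (w1 - a / α * e1) - p1 * (w0 - a / α * e0)) / (p0 * q1 - p1 * q0) * q1 := by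
      intro p0 p1 q0 q1 w0 w1 e0 e1 hden
      have h2 : q1 * p0 - q0 * p1 ≠ 0 := by intro h; apply hden; linarith
      constructor <;> (field_simp; ring)
    have key : ∀ i : Fin 2, w i = (a / α) * η i +
        (((w 0 - a / α * η 0) * (A *ᵥ v) 1 - (w 1 - a / α * η 1) * (A *ᵥ v) 0) /
          (v 0 * (A *ᵥ v) 1 - v 1 * (A *ᵥ v) 0)) * v i +
        ((v 0 * (w 1 - a / α * η 1) - v 1 * (w 0 - a / α * η 0)) /
          (v 0 * (A *ᵥ v) 1 - v 1 * (A *ᵥ v) 0)) * (A *ᵥ v) i := by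
      rw [Fin.forall_fin_two]
      exact scalar (v 0) (v 1) ((A *ᵥ v) 0) ((A *ᵥ v) 1) (w 0) (w 1) (η 0) (η 1) hdz
    have hx : ((a, w) : ℝ × (Fin 2 → ℝ)) = (a / α) • ((α, η) : ℝ × (Fin 2 → ℝ)) +
        (((w 0 - a / α * η 0) * (A *ᵥ v) 1 - (w 1 - a / α * η 1) * (A *ᵥ v) 0) /
          (v 0 * (A *ᵥ v) 1 - v 1 * (A *ᵥ v) 0)) • ((0 : ℝ), v) +
        ((v 0 * (w 1 - a / α * η 1) - v 1 * (w 0 - a / α * η 0)) /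
          (v 0 * (A *ᵥ v) 1 - v 1 * (A *ᵥ v) 0)) • ((0 : ℝ), A *ᵥ v) := by
      refine Prod.ext ?_ ?_
      · simp only [Prod.fst_add, Prod.smul_fst, smul_eq_mul]
        rw [mul_zero, mul_zero, add_zero, add_zero, div_mul_cancel₀ _ hα]
      · funext i
        simp only [Prod.snd_add, Prod.smul_snd, Pi.add_apply, Pi.smul_apply, smul_eq_mul]
        exact key i
    rw [hx]
    exact Submodule.add_mem _ (Submodule.add_mem _ (Submodule.smul_mem _ _ h1)
      (Submodule.smul_mem _ _ h2)) (Submodule.smul_mem _ _ h3)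
end

section
/- Let A and θ be real 2×2 matrices with Aθ = θA, η ∈ ℝ², and u₀ ∈ ℝ such that A − u₀θ is invertible, and set v₀ := −u₀ (A − u₀θ)⁻¹ η. Then η = θ v₀ if and only if Aη = 0. In particular, if in addition det A ≠ 0 and η ≠ 0, then −(A − u₀θ)⁻¹(η − θ v₀) ≠ 0, i.e., the equilibrium curve u ↦ −u(A − uθ)⁻¹η is regular at u₀. -/
open Matrix

/-- Let `Aθ = θA`, `A − u₀θ` invertible, and `v₀ = −u₀(A − u₀θ)⁻¹η` the equilibrium of
`v̇ = (A − u₀θ)v + u₀η`. Then `η = θv₀ ↔ Aη = 0`; in particular, if `det A ≠ 0` and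
`η ≠ 0` then the equilibrium curve is regular at `u₀`:
`−(A − u₀θ)⁻¹(η − θv₀) ≠ 0`. -/
theorem equilibrium_curve_regular (A θ : Matrix (Fin 2) (Fin 2) ℝ)
    (hcomm : A * θ = θ * A) (η : Fin 2 → ℝ) (u₀ : ℝ) (hu : IsUnit (A - u₀ • θ))
    (v₀ : Fin 2 → ℝ) (hv₀ : v₀ = (-u₀) • ((A - u₀ • θ)⁻¹ *ᵥ η)) :
    (η = θ *ᵥ v₀ ↔ A *ᵥ η = 0) ∧
    (A.det ≠ 0 → η ≠ 0 → -((A - u₀ • θ)⁻¹ *ᵥ (η - θ *ᵥ v₀)) ≠ 0) := by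
  set B := A - u₀ • θ with hB
  have hud : IsUnit B.det := (isUnit_iff_isUnit_det B).1 hu
  have hBθ : θ * B = B * θ := by
    simp only [hB, Matrix.sub_mul, Matrix.mul_sub, Matrix.mul_smul, Matrix.smul_mul, hcomm]
  have hθBi : θ * B⁻¹ = B⁻¹ * θ := by
    have h1 : B⁻¹ * (θ * B) * B⁻¹ = B⁻¹ * (B * θ) * B⁻¹ := by rw [hBθ]
    rw [← Matrix.mul_assoc, Matrix.mul_assoc (B⁻¹ * θ), mul_nonsing_inv _ hud,
      ← Matrix.mul_assoc, nonsing_inv_mul _ hud, Matrix.one_mul, Matrix.mul_one] at h1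
    rw [h1]
  have hA : A = B + u₀ • θ := by rw [hB]; abel
  have key : η - θ *ᵥ v₀ = B⁻¹ *ᵥ (A *ᵥ η) := by
    have h3 : B⁻¹ * A = 1 + u₀ • (B⁻¹ * θ) := by
      rw [hA, Matrix.mul_add, nonsing_inv_mul _ hud, Matrix.mul_smul]
    rw [mulVec_mulVec, h3, add_mulVec, one_mulVec, smul_mulVec, hv₀, mulVec_smul,
      mulVec_mulVec, hθBi]
    module
  have hinj : Function.Injective (B⁻¹ *ᵥ ·) :=
    mulVec_injective_iff_isUnit.2 (isUnit_nonsing_inv_iff.2 hu)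
  have hiff : η = θ *ᵥ v₀ ↔ A *ᵥ η = 0 := by
    rw [← sub_eq_zero, key]
    constructor
    · intro h
      rw [← mulVec_zero B⁻¹] at h
      exact hinj h
    · intro h; rw [h, mulVec_zero]
  refine ⟨hiff, fun hdet hη ↦ ?_⟩
  intro h
  have h2 : η - θ *ᵥ v₀ = 0 := by
    rw [← mulVec_zero B⁻¹]
    apply hinj
    simpa only [neg_eq_zero, mulVec_zero] using h
  have hA0 : A *ᵥ η = 0 := hiff.1 (sub_eq_zero.mp h2)
  have hAinj : Function.Injective (A *ᵥ ·) :=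
    mulVec_injective_iff_isUnit.2 ((isUnit_iff_isUnit_det A).2 (isUnit_iff_ne_zero.2 hdet))
  exact hη (hAinj (by simpa using hA0))
end

section
/- Let A be a real 2×2 matrix with det A ≠ 0. Then there exists δ > 0 such that det(I − e^{sA}) ≠ 0 for all s ∈ (0, δ), where I is the 2×2 identity matrix. -/
set_option maxHeartbeats 1000000


open Matrix Filter Nat

/-- If `det A ≠ 0`, then there exists `δ > 0` with `det(I − e^{sA}) ≠ 0` for all
`s ∈ (0, δ)`. -/
theorem det_one_sub_exp_ne_zero (A : Matrix (Fin 2) (Fin 2) ℝ) (hA : A.det ≠ 0) :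
    ∃ δ > (0 : ℝ), ∀ s ∈ Set.Ioo (0 : ℝ) δ, ((1 : Matrix (Fin 2) (Fin 2) ℝ)
      - NormedSpace.exp (s • A)).det ≠ 0 := by
  letI : SeminormedRing (Matrix (Fin 2) (Fin 2) ℝ) := Matrix.linftyOpSemiNormedRing
  letI : NormedRing (Matrix (Fin 2) (Fin 2) ℝ) := Matrix.linftyOpNormedRing
  letI : NormedAlgebra ℝ (Matrix (Fin 2) (Fin 2) ℝ) := Matrix.linftyOpNormedAlgebra
  set F : ℝ → Matrix (Fin 2) (Fin 2) ℝ :=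
    fun s => ∑' n : ℕ, (s ^ n / ((n + 3) ! : ℝ)) • A ^ (n + 3) with hFdef
  set G : ℝ → Matrix (Fin 2) (Fin 2) ℝ :=
    fun s => A + ((s / 2) • A ^ 2 + s ^ 2 • F s) with hGdef
  -- the key expansion
  have hexp : ∀ s : ℝ, (1 : Matrix (Fin 2) (Fin 2) ℝ) - NormedSpace.exp (s • A)
      = (-s) • G s := by
    intro s
    have hsum : Summable fun n : ℕ => ((n !⁻¹ : ℝ)) • (s • A) ^ n :=
      NormedSpace.expSeries_summable' (𝕂 := ℝ) (s • A)
    have h1 : NormedSpace.exp (s • A)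
        = (∑ n ∈ Finset.range 3, ((n !⁻¹ : ℝ)) • (s • A) ^ n)
          + ∑' n : ℕ, ((((n + 3) !)⁻¹ : ℝ)) • (s • A) ^ (n + 3) := by
      rw [NormedSpace.exp_eq_tsum ℝ]
      exact (Summable.sum_add_tsum_nat_add 3 hsum).symm
    have h2 : (∑' n : ℕ, ((((n + 3) !)⁻¹ : ℝ)) • (s • A) ^ (n + 3)) = s ^ 3 • F s := by
      rw [hFdef, ← tsum_const_smul'' (s ^ 3)]
      congr 1
      funext n
      rw [smul_pow, smul_smul, smul_smul]
      congr 1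
      field_simp
      ring
    rw [h1, h2, hGdef]
    simp only [Finset.sum_range_succ, Finset.sum_range_zero, zero_add, pow_zero, pow_one,
      smul_pow, Nat.factorial_zero, Nat.factorial_one, Nat.factorial_two, Nat.cast_one,
      Nat.cast_ofNat, inv_one, one_smul]
    module
  -- bound on F near 0
  set C : ℝ := ∑' n : ℕ, ‖A‖ ^ (n + 3) / ((n + 3) ! : ℝ) with hCdef
  have hCsum : Summable fun n : ℕ => ‖A‖ ^ (n + 3) / ((n + 3) ! : ℝ) :=
    (summable_nat_add_iff 3).2 (Real.summable_pow_div_factorial ‖A‖)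
  have hC0 : 0 ≤ C := tsum_nonneg fun n => by positivity
  have hFb : ∀ s : ℝ, |s| ≤ 1 → ‖F s‖ ≤ C := by
    intro s hs
    refine tsum_of_norm_bounded hCsum.hasSum fun n => ?_
    rw [norm_smul]
    have h1 : ‖A ^ (n + 3)‖ ≤ ‖A‖ ^ (n + 3) := norm_pow_le' A (Nat.succ_pos _)
    have h2 : ‖(s ^ n / ((n + 3) ! : ℝ))‖ ≤ 1 / ((n + 3) ! : ℝ) := by
      rw [Real.norm_eq_abs, abs_div, abs_pow,
        abs_of_nonneg (by positivity : (0:ℝ) ≤ ((n + 3) ! : ℝ))]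
      gcongr
      exact pow_le_one₀ (abs_nonneg s) hs
    calc ‖(s ^ n / ((n + 3) ! : ℝ))‖ * ‖A ^ (n + 3)‖
        ≤ (1 / ((n + 3) ! : ℝ)) * ‖A‖ ^ (n + 3) := by gcongr
      _ = ‖A‖ ^ (n + 3) / ((n + 3) ! : ℝ) := by ring
  -- G tends to A along 𝓝[>] 0
  have hGtendsto : Tendsto G (nhdsWithin 0 (Set.Ioi 0)) (nhds A) := by
    rw [← tendsto_sub_nhds_zero_iff]
    apply squeeze_zero_norm' (a := fun s : ℝ => |s| * (‖A ^ 2‖ / 2 + C))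
    · have h1 : ∀ᶠ s : ℝ in nhdsWithin 0 (Set.Ioi 0), |s| ≤ 1 := by
        apply eventually_nhdsWithin_of_eventually_nhds
        have habs : Tendsto (fun s : ℝ => |s|) (nhds 0) (nhds 0) := by
          simpa using continuous_abs.tendsto (0 : ℝ)
        exact habs.eventually_le_const (by norm_num)
      filter_upwards [h1] with s hs
      have hGA : G s - A = (s / 2) • A ^ 2 + s ^ 2 • F s := by
        rw [hGdef]; exact add_sub_cancel_left A _
      rw [hGA]
      calc ‖(s / 2) • A ^ 2 + s ^ 2 • F s‖
          ≤ ‖(s / 2) • A ^ 2‖ + ‖s ^ 2 • F s‖ := norm_add_le _ _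
        _ = |s| / 2 * ‖A ^ 2‖ + s ^ 2 * ‖F s‖ := by
            rw [norm_smul, norm_smul, Real.norm_eq_abs, Real.norm_eq_abs, abs_div, abs_pow,
              sq_abs]
            norm_num
        _ ≤ |s| / 2 * ‖A ^ 2‖ + |s| * C := by
            have hs2 : s ^ 2 ≤ |s| := by
              rw [← sq_abs]
              nlinarith [abs_nonneg s]
            have h2 : s ^ 2 * ‖F s‖ ≤ |s| * C :=
              mul_le_mul hs2 (hFb s hs) (norm_nonneg _) (abs_nonneg s)
            linarith
        _ = |s| * (‖A ^ 2‖ / 2 + C) := by ring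
    · have habs : Tendsto (fun s : ℝ => |s|) (nhdsWithin 0 (Set.Ioi 0)) (nhds 0) := by
        apply tendsto_nhdsWithin_of_tendsto_nhds
        have h0 := continuous_abs.tendsto (0 : ℝ)
        rwa [abs_zero] at h0
      have h1 := habs.mul_const (‖A ^ 2‖ / 2 + C)
      rwa [zero_mul] at h1
  -- determinant of G tends to det A ≠ 0
  have hdet : Tendsto (fun s => (G s).det) (nhdsWithin 0 (Set.Ioi 0)) (nhds A.det) := by
    have hcont : Continuous fun M : Matrix (Fin 2) (Fin 2) ℝ => M.det := continuous_id.matrix_det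
    exact (hcont.tendsto A).comp hGtendsto
  have hev : ∀ᶠ s : ℝ in nhdsWithin 0 (Set.Ioi 0), (G s).det ≠ 0 := hdet.eventually_ne hA
  rw [eventually_iff, mem_nhdsGT_iff_exists_Ioo_subset] at hev
  obtain ⟨u, hu, hsub⟩ := hev
  refine ⟨u, hu, fun s hs => ?_⟩
  have hGs : (G s).det ≠ 0 := hsub hs
  rw [hexp s, Matrix.det_smul]
  simp only [Fintype.card_fin]
  intro h
  rcases mul_eq_zero.1 h with h1 | h2
  · have hs0 : s ≠ 0 := ne_of_gt hs.1
    have := pow_eq_zero_iff (n := 2) (by norm_num) |>.1 h1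
    simp at this
    exact hs0 this
  · exact hGs h2
end

section
/- Let A be a nonzero real 2×2 matrix and s₀ ≠ 0 a real number such that e^{s₀A} = I, the identity matrix. Then trace A = 0 and det A > 0 (equivalently, A has a pair of nonzero purely imaginary eigenvalues). -/
open Matrix NormedSpace

attribute [local instance] Matrix.linftyOpNormedRing Matrix.linftyOpNormedAlgebra

lemma exp_mulVec_eigen {𝕜 : Type} [RCLike 𝕜] (M : Matrix (Fin 2) (Fin 2) 𝕜) (v : Fin 2 → 𝕜)
    (μ : 𝕜) (h : M.mulVec v = μ • v) : (exp M).mulVec v = exp μ • v := by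
  have hpow : ∀ n : ℕ, (M ^ n).mulVec v = μ ^ n • v := by
    intro n
    induction n with
    | zero => simp
    | succ n ih =>
      rw [pow_succ', pow_succ', ← Matrix.mulVec_mulVec, ih, Matrix.mulVec_smul, h,
        smul_smul, mul_comm]
  have hS : Summable fun n : ℕ => ((Nat.factorial n : ℝ)⁻¹) • M ^ n :=
    expSeries_summable' (𝕂 := ℝ) M
  let L : Matrix (Fin 2) (Fin 2) 𝕜 →ₗ[ℝ] (Fin 2 → 𝕜) :=
    { toFun := fun N => N.mulVec v
      map_add' := fun a b => Matrix.add_mulVec a b v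
      map_smul' := fun c N => by simp [Matrix.smul_mulVec] }
  have hL : Continuous L := L.continuous_of_finiteDimensional
  have key := (ContinuousLinearMap.mk L hL : _).map_tsum hS
  simp only [ContinuousLinearMap.coe_mk'] at key
  have h1 : (exp M).mulVec v = ∑' n : ℕ, L ((Nat.factorial n : ℝ)⁻¹ • M ^ n) := by
    rw [exp_eq_tsum ℝ]; exact key
  have h2 : ∀ n : ℕ, L ((Nat.factorial n : ℝ)⁻¹ • M ^ n)
      = ((Nat.factorial n : ℝ)⁻¹ • μ ^ n) • v := by
    intro n
    show ((Nat.factorial n : ℝ)⁻¹ • M ^ n).mulVec v = _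
    rw [Matrix.smul_mulVec, hpow, smul_assoc]
  rw [h1]
  simp_rw [h2]
  rw [Summable.tsum_smul_const (expSeries_summable' (𝕂 := ℝ) μ), exp_eq_tsum ℝ]

/-- If `exp ℝ M = 1` and `μ` is an eigenvalue of `M` (i.e. `det (M - μ • 1) = 0`)
then `exp ℝ μ = 1`. -/
lemma exp_eig_eq_one {𝕜 : Type} [RCLike 𝕜] (M : Matrix (Fin 2) (Fin 2) 𝕜)
    (hM : exp M = 1) (μ : 𝕜) (hdet : (M - μ • 1).det = 0) : exp μ = 1 := by
  obtain ⟨v, hv0, hv⟩ := (Matrix.exists_mulVec_eq_zero_iff).2 hdet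
  have hMv : M.mulVec v = μ • v := by
    have := hv
    rw [Matrix.sub_mulVec, sub_eq_zero, Matrix.smul_mulVec, Matrix.one_mulVec] at this
    exact this
  have := exp_mulVec_eigen M v μ hMv
  rw [hM, Matrix.one_mulVec] at this
  have h0 : (exp μ - 1) • v = 0 := by rw [sub_smul, one_smul, ← this, sub_self]
  rcases smul_eq_zero.1 h0 with h | h
  · exact sub_eq_zero.1 h
  · exact absurd h hv0

/-- If `B ≠ 0` and `exp ℝ B = 1`, then `trace B = 0` and `det B > 0`. -/
lemma core (B : Matrix (Fin 2) (Fin 2) ℝ) (hB : B ≠ 0) (hexpB : exp B = 1) :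
    B.trace = 0 ∧ 0 < B.det := by
  set t := B.trace with ht'
  set d := B.det with hd'
  have ht : t = B 0 0 + B 1 1 := Matrix.trace_fin_two B
  have hd : d = B 0 0 * B 1 1 - B 0 1 * B 1 0 := Matrix.det_fin_two B
  rcases lt_or_ge (t ^ 2 - 4 * d) 0 with hdisc | hdisc
  · -- complex eigenvalue case
    set y : ℝ := Real.sqrt (4 * d - t ^ 2) / 2 with hy'
    have hy2 : y ^ 2 = (4 * d - t ^ 2) / 4 := by
      rw [hy', div_pow, Real.sq_sqrt (by linarith)]; ring
    set μ : ℂ := ⟨t / 2, y⟩ with hμ'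
    have hre : μ.re = t / 2 := rfl
    have him : μ.im = y := rfl
    have hquad : μ * μ - (t : ℂ) * μ + (d : ℂ) = 0 := by
      apply Complex.ext <;>
        simp [Complex.mul_re, Complex.mul_im, hre, him] <;> nlinarith [hy2]
    set M : Matrix (Fin 2) (Fin 2) ℂ := B.map (Complex.ofReal) with hM'
    have hexpM : exp M = 1 := by
      have hcont : Continuous
          ((Complex.ofRealHom.mapMatrix : Matrix (Fin 2) (Fin 2) ℝ →+* Matrix (Fin 2) (Fin 2) ℂ)) := by
        let L : Matrix (Fin 2) (Fin 2) ℝ →ₗ[ℝ] Matrix (Fin 2) (Fin 2) ℂ :=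
          { toFun := fun N => N.map Complex.ofReal
            map_add' := fun a b => by ext i j; simp
            map_smul' := fun c N => by ext i j; simp }
        exact L.continuous_of_finiteDimensional
      have := map_exp (Complex.ofRealHom.mapMatrix :
          Matrix (Fin 2) (Fin 2) ℝ →+* Matrix (Fin 2) (Fin 2) ℂ) hcont B
      erw [hexpB, _root_.map_one] at this
      have hMeq : M = Complex.ofRealHom.mapMatrix B := by
        ext i j; simp [hM']
      rw [hMeq]; exact this.symm
    have hdet : (M - μ • 1).det = 0 := by
      rw [Matrix.det_fin_two]
      simp only [Matrix.sub_apply, Matrix.smul_apply, Matrix.one_apply, hM', Matrix.map_apply]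
      norm_num
      rw [ht, hd] at hquad
      push_cast at hquad ⊢
      linear_combination hquad
    have h1 := exp_eig_eq_one M hexpM μ hdet
    have h2 : Complex.exp μ = 1 := by
      rw [Complex.exp_eq_exp_ℂ]; exact h1
    have habs : Real.exp μ.re = 1 := by
      have := congrArg (‖·‖) h2
      rwa [Complex.norm_exp, norm_one] at this
    have ht0 : t = 0 := by
      have : μ.re = 0 := Real.exp_injective (by rw [habs, Real.exp_zero])
      rw [hre] at this; linarith
    exact ⟨ht0, by nlinarith⟩
  · -- real eigenvalue case leads to contradiction
    exfalso
    set s : ℝ := Real.sqrt (t ^ 2 - 4 * d) with hs'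
    have hs2 : s ^ 2 = t ^ 2 - 4 * d := Real.sq_sqrt hdisc
    have hroot : ∀ r : ℝ, r * r - t * r + d = 0 → r = 0 := by
      intro r hr
      have hdet : (B - r • 1).det = 0 := by
        rw [Matrix.det_fin_two]
        simp only [Matrix.sub_apply, Matrix.smul_apply, Matrix.one_apply]
        norm_num
        rw [ht, hd] at hr
        linear_combination hr
      have h1 := exp_eig_eq_one B hexpB r hdet
      have : Real.exp r = 1 := by rw [Real.exp_eq_exp_ℝ]; exact h1
      exact Real.exp_injective (by rw [this, Real.exp_zero])
    have hr1 : (t + s) / 2 = 0 := hroot _ (by nlinarith)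
    have hr2 : (t - s) / 2 = 0 := hroot _ (by nlinarith)
    have ht0 : t = 0 := by linarith
    have hd0 : d = 0 := by nlinarith
    -- B is nilpotent : B * B = 0 by Cayley–Hamilton
    have e1 : B 0 0 + B 1 1 = 0 := by rw [← ht]; exact ht0
    have e2 : B 0 0 * B 1 1 - B 0 1 * B 1 0 = 0 := by rw [← hd]; exact hd0
    have hCH : B * B = 0 := by
      ext i j
      fin_cases i <;> fin_cases j <;>
        simp only [Matrix.mul_apply, Fin.sum_univ_two, Matrix.zero_apply, Fin.mk_zero, Fin.mk_one]
      · linear_combination B 0 0 * e1 - e2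
      · linear_combination B 0 1 * e1
      · linear_combination B 1 0 * e1
      · linear_combination B 1 1 * e1 - e2
    -- exp B = 1 + B
    have hpow0 : ∀ n : ℕ, 2 ≤ n → B ^ n = 0 := by
      intro n hn
      obtain ⟨k, rfl⟩ := Nat.exists_eq_add_of_le hn
      rw [pow_add, pow_two, hCH, zero_mul]
    have hexp' : exp B = 1 + B := by
      have hrw : exp B = ∑' n : ℕ, (Nat.factorial n : ℝ)⁻¹ • B ^ n := by
        rw [exp_eq_tsum ℝ]
      rw [hrw]
      rw [tsum_eq_sum (s := Finset.range 2) (by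
        intro n hn
        rw [hpow0 n (by simp at hn; omega)]
        simp)]
      rw [Finset.sum_range_succ, Finset.sum_range_one]
      simp
    rw [hexpB] at hexp'
    have : B = 0 := by
      have := hexp'.symm
      rwa [add_eq_left] at this
    exact hB this

/-- If `A ≠ 0` and `e^{s₀A} = I` for some `s₀ ≠ 0`, then `trace A = 0` and `det A > 0`
(that is, `A` has a pair of nonzero purely imaginary eigenvalues). -/
theorem trace_eq_zero_det_pos_of_exp_eq_one (A : Matrix (Fin 2) (Fin 2) ℝ)
    (hA : A ≠ 0) (s₀ : ℝ) (hs₀ : s₀ ≠ 0)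
    (hexp : NormedSpace.exp (s₀ • A) = 1) :
    A.trace = 0 ∧ 0 < A.det := by
  have hB : s₀ • A ≠ 0 := smul_ne_zero hs₀ hA
  obtain ⟨h1, h2⟩ := core (s₀ • A) hB hexp
  rw [Matrix.trace_smul] at h1
  rw [Matrix.det_smul] at h2
  constructor
  · rcases smul_eq_zero.1 h1 with h | h
    · exact absurd h hs₀
    · exact h
  · have hcard : (Fintype.card (Fin 2)) = 2 := by simp
    rw [hcard] at h2
    nlinarith [pow_two_pos_of_ne_zero hs₀]
end

section
/- Let A and θ be real 2×2 matrices with Aθ = θA, and let η ∈ ℝ² be such that NOT both ⟨Aη, Rη⟩ = 0 and ⟨θη, Rη⟩ = 0 hold (i.e., η is not a common eigenvector of A and θ). If u₀ ∈ ℝ satisfies ⟨(A − u₀θ)η, Rη⟩ = 0, then A − u₀θ is a scalar matrix: there exists λ ∈ ℝ with A − u₀θ = λ·I. -/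
open Matrix

/-- If `Aθ = θA`, `η` is not a common eigenvector of `A` and `θ`, and
`⟨(A − u₀θ)η, Rη⟩ = 0`, then `A − u₀θ` is a scalar matrix. -/
theorem scalar_matrix_of_eigenvector (A θ : Matrix (Fin 2) (Fin 2) ℝ)
    (hcomm : A * θ = θ * A) (η : Fin 2 → ℝ)
    (hη : ¬((A *ᵥ η) ⬝ᵥ (Rot *ᵥ η) = 0 ∧ (θ *ᵥ η) ⬝ᵥ (Rot *ᵥ η) = 0))
    (u₀ : ℝ) (h₀ : ((A - u₀ • θ) *ᵥ η) ⬝ᵥ (Rot *ᵥ η) = 0) :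
    ∃ lam : ℝ, A - u₀ • θ = lam • (1 : Matrix (Fin 2) (Fin 2) ℝ) := by
  set B := A - u₀ • θ with hB
  have hcommB : B * θ = θ * B := by
    rw [hB, Matrix.sub_mul, Matrix.mul_sub, hcomm, Matrix.smul_mul, Matrix.mul_smul]
  have hD : (θ *ᵥ η) ⬝ᵥ (Rot *ᵥ η) ≠ 0 := by
    intro hD
    apply hη
    refine ⟨?_, hD⟩
    have hA : A = B + u₀ • θ := by rw [hB, sub_add_cancel]
    rw [hA]
    rw [Matrix.add_mulVec, add_dotProduct, h₀, Matrix.smul_mulVec,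
      smul_dotProduct, hD, smul_zero, add_zero]
  -- scalar versions
  simp [Rot, Matrix.mulVec, dotProduct, Fin.sum_univ_two] at h₀ hD
  have c1 := congrFun (congrFun hcommB 0) 0
  have c2 := congrFun (congrFun hcommB 0) 1
  have c3 := congrFun (congrFun hcommB 1) 0
  simp only [Matrix.mul_apply, Fin.sum_univ_two] at c1 c2 c3
  have hb : B 0 1 = 0 := by
    have h1 : B 0 1 * (-((θ 0 0 * η 0 + θ 0 1 * η 1) * η 1) + (θ 1 0 * η 0 + θ 1 1 * η 1) * η 0) = 0 := by
      linear_combination η 0 * η 1 * c2 + (η 0)^2 * c1 + θ 0 1 * h₀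
    exact (mul_eq_zero.mp h1).resolve_right hD
  have hc : B 1 0 = 0 := by
    have h1 : B 1 0 * (-((θ 0 0 * η 0 + θ 0 1 * η 1) * η 1) + (θ 1 0 * η 0 + θ 1 1 * η 1) * η 0) = 0 := by
      linear_combination -(η 0 * η 1) * c3 + (η 1)^2 * c1 + θ 1 0 * h₀
    exact (mul_eq_zero.mp h1).resolve_right hD
  have had : B 0 0 = B 1 1 := by
    have h1 : (B 0 0 - B 1 1) * (-((θ 0 0 * η 0 + θ 0 1 * η 1) * η 1) + (θ 1 0 * η 0 + θ 1 1 * η 1) * η 0) = 0 := by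
      linear_combination -(η 0)^2 * c3 - (η 1)^2 * c2 + (θ 0 0 - θ 1 1) * h₀
    have := (mul_eq_zero.mp h1).resolve_right hD
    linarith
  refine ⟨B 0 0, ?_⟩
  ext i j
  fin_cases i <;> fin_cases j <;>
    simp [Matrix.one_apply, hb, hc, had.symm]
end

section
/- Let A and θ be real 2×2 matrices with Aθ = θA and rank A = 1. Then for every ξ ∈ ℝ², if ⟨Aξ, Rξ⟩ = 0 then ⟨θξ, Rξ⟩ = 0. (Consequently, for a nilrank-one linear control system, ⟨Aξ, Rξ⟩² + ⟨θξ, Rξ⟩² ≠ 0 if and only if ⟨Aξ, Rξ⟩ ≠ 0; i.e., the Lie algebra rank condition is equivalent to the ad-rank condition.) -/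
open Matrix

lemma key_scalar (a b c d p q r s x y : ℝ)
    (h1 : b * r = c * q) (h2 : q * (a - d) = b * (p - s)) (h3 : r * (a - d) = c * (p - s))
    (hdet : a * d - b * c = 0) (hne : ¬ (a = 0 ∧ b = 0 ∧ c = 0 ∧ d = 0))
    (hA : c * x ^ 2 + (d - a) * x * y - b * y ^ 2 = 0) :
    r * x ^ 2 + (s - p) * x * y - q * y ^ 2 = 0 := by
  rcases eq_or_ne (a - d) 0 with had | had
  · -- a = d
    rcases eq_or_ne (p - s) 0 with hps | hps
    · -- p = s
      rcases eq_or_ne c 0 with hc | hc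
      · -- hyp: b y² = 0
        rcases eq_or_ne b 0 with hb | hb
        · exfalso
          have ha2 : a ^ 2 = 0 := by linear_combination hdet + a * had + c * hb
          have ha : a = 0 := by
            have := pow_eq_zero_iff (n := 2) (by norm_num) |>.mp ha2
            exact this
          exact hne ⟨ha, hb, hc, by linarith⟩
        · have hby : b * y ^ 2 = 0 := by linear_combination -hA + x ^ 2 * hc - x * y * had
          have hy : y = 0 := by
            have hy2 : y ^ 2 = 0 := by
              rcases mul_eq_zero.mp hby with h | h
              · exact absurd h hb
              · exact h
            exact pow_eq_zero_iff (n := 2) (by norm_num) |>.mp hy2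
          have hr : r = 0 := by
            have hbr : b * r = 0 := by rw [h1, hc]; ring
            rcases mul_eq_zero.mp hbr with h | h
            · exact absurd h hb
            · exact h
          rw [hy, hr]; ring
      · -- c ≠ 0 : c x² = b y²
        have hx2 : c * x ^ 2 = b * y ^ 2 := by linear_combination hA + x * y * had
        have hc0 : c * (r * x ^ 2 + (s - p) * x * y - q * y ^ 2) = 0 := by
          linear_combination r * hx2 + y ^ 2 * h1 - c * x * y * hps
        rcases mul_eq_zero.mp hc0 with h | h
        · exact absurd h hc
        · exact h
    · -- p ≠ s : b = 0 and c = 0, contradiction with A ≠ 0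
      have hb : b = 0 := by
        have h : b * (p - s) = 0 := by rw [← h2, had]; ring
        rcases mul_eq_zero.mp h with h | h
        · exact h
        · exact absurd h hps
      have hc : c = 0 := by
        have h : c * (p - s) = 0 := by rw [← h3, had]; ring
        rcases mul_eq_zero.mp h with h | h
        · exact h
        · exact absurd h hps
      exfalso
      have ha2 : a ^ 2 = 0 := by linear_combination hdet + a * had + c * hb
      have ha : a = 0 := pow_eq_zero_iff (n := 2) (by norm_num) |>.mp ha2
      exact hne ⟨ha, hb, hc, by linarith⟩
  · -- a ≠ d
    have hkey : (a - d) * (r * x ^ 2 + (s - p) * x * y - q * y ^ 2) = 0 := by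
      linear_combination x ^ 2 * h3 - y ^ 2 * h2 + (p - s) * hA
    rcases mul_eq_zero.mp hkey with h | h
    · exact absurd h had
    · exact h

/-- If `Aθ = θA` and `rank A = 1`, then for every `ξ`, `⟨Aξ, Rξ⟩ = 0` implies
`⟨θξ, Rξ⟩ = 0`. Consequently, for a nilrank-one linear control system the Lie algebra
rank condition is equivalent to the ad-rank condition. -/
theorem larc_eq_adrank_of_rank_one (A θ : Matrix (Fin 2) (Fin 2) ℝ)
    (hcomm : A * θ = θ * A) (hrank : A.rank = 1) :
    ∀ ξ : Fin 2 → ℝ, (A *ᵥ ξ) ⬝ᵥ (Rot *ᵥ ξ) = 0 → (θ *ᵥ ξ) ⬝ᵥ (Rot *ᵥ ξ) = 0 := by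
  intro ξ hA
  set a := A 0 0 with ha_def; set b := A 0 1 with hb_def
  set c := A 1 0 with hc_def; set d := A 1 1 with hd_def
  set p := θ 0 0 with hp_def; set q := θ 0 1 with hq_def
  set r := θ 1 0 with hr_def; set s := θ 1 1 with hs_def
  set x := ξ 0 with hx_def; set y := ξ 1 with hy_def
  have hdet : a * d - b * c = 0 := by
    by_contra hd
    have hdne : A.det ≠ 0 := by
      rw [Matrix.det_fin_two]
      intro h; exact hd (by linear_combination h)
    have hu : IsUnit A := (Matrix.isUnit_iff_isUnit_det A).mpr (isUnit_iff_ne_zero.mpr hdne)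
    have h2 := A.rank_of_isUnit hu
    rw [hrank] at h2
    simp at h2
  have hne : ¬ (a = 0 ∧ b = 0 ∧ c = 0 ∧ d = 0) := by
    rintro ⟨h0, h1, h2, h3⟩
    have hA0 : A = 0 := by
      ext i j
      fin_cases i <;> fin_cases j <;> assumption
    rw [hA0, Matrix.rank_zero] at hrank
    exact absurd hrank (by norm_num)
  have e00 := congrFun (congrFun hcomm 0) 0
  have e01 := congrFun (congrFun hcomm 0) 1
  have e10 := congrFun (congrFun hcomm 1) 0
  simp only [Matrix.mul_apply, Fin.sum_univ_two] at e00 e01 e10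
  have h1 : b * r = c * q := by linarith
  have h2 : q * (a - d) = b * (p - s) := by linarith
  have h3 : r * (a - d) = c * (p - s) := by linarith
  have hA' : c * x ^ 2 + (d - a) * x * y - b * y ^ 2 = 0 := by
    simp only [Rot, Matrix.mulVec, dotProduct, Fin.sum_univ_two, Matrix.of_apply,
      Matrix.cons_val_zero, Matrix.cons_val_one, Matrix.head_cons] at hA
    linear_combination hA
  have goal := key_scalar a b c d p q r s x y h1 h2 h3 hdet hne hA'
  simp only [Rot, Matrix.mulVec, dotProduct, Fin.sum_univ_two, Matrix.of_apply,
    Matrix.cons_val_zero, Matrix.cons_val_one, Matrix.head_cons]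
  linear_combination goal
end

section
/- Let γ ∈ ℝ with |γ| ≤ 1 and let θ be the real 2×2 diagonal matrix with diagonal entries 1 and γ. For every ξ ∈ ℝ² with ⟨θξ, Rξ⟩ ≠ 0, there exists ξ̂ ∈ ℝ² such that ⟨Λ^θ_t ξ, ξ̂⟩ ≥ 0 for all t ∈ ℝ. -/
open Matrix

lemma exp_smul_diag (γ s : ℝ) :
    NormedSpace.exp (s • (!![1, 0; 0, γ] : Matrix (Fin 2) (Fin 2) ℝ)) =
      !![Real.exp s, 0; 0, Real.exp (γ * s)] := by
  have h1 : (!![1, 0; 0, γ] : Matrix (Fin 2) (Fin 2) ℝ) = Matrix.diagonal ![1, γ] := by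
    ext i j
    fin_cases i <;> fin_cases j <;> simp [Matrix.diagonal]
  have h2 : s • (!![1, 0; 0, γ] : Matrix (Fin 2) (Fin 2) ℝ) = Matrix.diagonal ![s, γ * s] := by
    rw [h1, ← Matrix.diagonal_smul]
    ext i
    fin_cases i <;> simp [mul_comm]
  rw [h2, Matrix.exp_diagonal]
  ext i j
  fin_cases i <;> fin_cases j <;>
    simp [Matrix.diagonal, Pi.coe_exp, ← Real.exp_eq_exp_ℝ]

lemma exp_nonneg_key (γ : ℝ) (hγ1 : γ ≤ 1) (t : ℝ) :
    0 ≤ ∫ s in (0:ℝ)..t, (Real.exp s - Real.exp (γ * s)) := by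
  rcases le_or_gt 0 t with ht | ht
  · apply intervalIntegral.integral_nonneg ht
    intro s hs
    have : γ * s ≤ s := by nlinarith [hs.1]
    simpa using Real.exp_le_exp.2 this
  · have hA : 0 ≤ ∫ s in t..(0:ℝ), (Real.exp (γ * s) - Real.exp s) := by
      apply intervalIntegral.integral_nonneg ht.le
      intro s hs
      have : s ≤ γ * s := by nlinarith [hs.2]
      simpa using Real.exp_le_exp.2 this
    have hB : ∫ s in t..(0:ℝ), (Real.exp (γ * s) - Real.exp s)
        = - ∫ s in t..(0:ℝ), (Real.exp s - Real.exp (γ * s)) := by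
      rw [← intervalIntegral.integral_neg]; congr 1; ext s; ring
    have hC : ∫ s in t..(0:ℝ), (Real.exp s - Real.exp (γ * s))
        = - ∫ s in (0:ℝ)..t, (Real.exp s - Real.exp (γ * s)) :=
      intervalIntegral.integral_symm 0 t
    rw [hB, hC] at hA
    linarith

/-- For `θ = diag(1, γ)` with `|γ| ≤ 1` and any `ξ` with `⟨θξ, Rξ⟩ ≠ 0`, there is a
vector `ξ̂` such that `⟨Λ^θ_t ξ, ξ̂⟩ ≥ 0` for all `t`. -/
theorem exists_nonneg_pairing_diagonal (γ : ℝ) (hγ : |γ| ≤ 1)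
    (θ : Matrix (Fin 2) (Fin 2) ℝ) (hθ : θ = !![1, 0; 0, γ])
    (ξ : Fin 2 → ℝ) (hξ : (θ *ᵥ ξ) ⬝ᵥ (Rot *ᵥ ξ) ≠ 0) :
    ∃ ξhat : Fin 2 → ℝ, ∀ t : ℝ, 0 ≤ (Lam θ t ξ) ⬝ᵥ ξhat := by
  have hγ1 : γ ≤ 1 := (abs_le.mp hγ).2
  have hdot : (θ *ᵥ ξ) ⬝ᵥ (Rot *ᵥ ξ) = (γ - 1) * (ξ 0 * ξ 1) := by
    simp [hθ, Rot, Matrix.mulVec, dotProduct, Fin.sum_univ_two]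
    ring
  rw [hdot] at hξ
  have hξ0 : ξ 0 ≠ 0 := by intro h; apply hξ; rw [h]; ring
  have hξ1 : ξ 1 ≠ 0 := by intro h; apply hξ; rw [h]; ring
  refine ⟨![1 / ξ 0, -(1 / ξ 1)], fun t => ?_⟩
  -- compute the integrand
  have hint : ∀ s : ℝ, (NormedSpace.exp (s • θ)) *ᵥ ξ
      = ![Real.exp s * ξ 0, Real.exp (γ * s) * ξ 1] := by
    intro s
    rw [hθ, exp_smul_diag]
    ext i
    fin_cases i <;> simp [Matrix.mulVec, dotProduct, Fin.sum_univ_two]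
  have hcont : Continuous fun s : ℝ =>
      (![Real.exp s * ξ 0, Real.exp (γ * s) * ξ 1] : Fin 2 → ℝ) := by
    apply continuous_pi
    intro i
    fin_cases i <;> simp <;> fun_prop
  have hLam : Lam θ t ξ = ∫ s in (0:ℝ)..t, ![Real.exp s * ξ 0, Real.exp (γ * s) * ξ 1] := by
    unfold Lam
    exact intervalIntegral.integral_congr fun s _ => hint s
  have hInteg : IntervalIntegrable
      (fun s : ℝ => (![Real.exp s * ξ 0, Real.exp (γ * s) * ξ 1] : Fin 2 → ℝ))
      MeasureTheory.volume 0 t := hcont.intervalIntegrable 0 t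
  have hcomp : ∀ i : Fin 2, Lam θ t ξ i
      = ∫ s in (0:ℝ)..t, (![Real.exp s * ξ 0, Real.exp (γ * s) * ξ 1] : Fin 2 → ℝ) i := by
    intro i
    rw [hLam]
    exact ((ContinuousLinearMap.proj (R := ℝ) (φ := fun _ : Fin 2 => ℝ)
      i).intervalIntegral_comp_comm hInteg).symm
  have h0 : Lam θ t ξ 0 = (Real.exp t - 1) * ξ 0 := by
    rw [hcomp 0]
    simp only [Matrix.cons_val_zero]
    rw [intervalIntegral.integral_mul_const, integral_exp, Real.exp_zero]
  have h1 : Lam θ t ξ 1 = (∫ s in (0:ℝ)..t, Real.exp (γ * s)) * ξ 1 := by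
    rw [hcomp 1]
    simp only [Matrix.cons_val_one, Matrix.head_cons, Matrix.cons_val_zero]
    rw [intervalIntegral.integral_mul_const]
  have key := exp_nonneg_key γ hγ1 t
  have hsub : (∫ s in (0:ℝ)..t, (Real.exp s - Real.exp (γ * s)))
      = (Real.exp t - 1) - ∫ s in (0:ℝ)..t, Real.exp (γ * s) := by
    rw [intervalIntegral.integral_sub (Real.continuous_exp.intervalIntegrable 0 t)
      ((by fun_prop : Continuous fun s : ℝ => Real.exp (γ * s)).intervalIntegrable 0 t)]
    rw [integral_exp, Real.exp_zero]
  rw [hsub] at key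
  have hdot2 : (Lam θ t ξ) ⬝ᵥ ![1 / ξ 0, -(1 / ξ 1)]
      = (Real.exp t - 1) - ∫ s in (0:ℝ)..t, Real.exp (γ * s) := by
    simp [dotProduct, Fin.sum_univ_two, h0, h1]
    field_simp
    ring
  rw [hdot2]
  exact key
end

section
/- Let γ ∈ ℝ and θ = γI + R, where I is the 2×2 identity matrix and R is the counterclockwise rotation by π/2. Then θ is invertible and for every ξ ∈ ℝ² and t ∈ ℝ, ⟨Λ^θ_t ξ, R θ⁻¹ ξ⟩ = ‖θ⁻¹ξ‖² e^{γt} sin t. -/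
open Matrix

lemma rot_sq : Rot * Rot = -1 := by
  show (!![0, -1; 1, 0] : Matrix (Fin 2) (Fin 2) ℝ) * !![0,-1;1,0] = -1
  rw [Matrix.mul_fin_two]
  norm_num [Matrix.one_fin_two]
  ext i j; fin_cases i <;> fin_cases j <;> simp

lemma exp_key (γ s : ℝ) :
    NormedSpace.exp (s • (γ • (1 : Matrix (Fin 2) (Fin 2) ℝ) + Rot)) =
      Real.exp (γ * s) • (Real.cos s • (1 : Matrix (Fin 2) (Fin 2) ℝ) + Real.sin s • Rot) := by
  set φ := Complex.liftAux Rot rot_sq with hφ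
  have hφc : Continuous φ := φ.toLinearMap.continuous_of_finiteDimensional
  have hz : s • (γ • (1 : Matrix (Fin 2) (Fin 2) ℝ) + Rot) = φ ⟨s * γ, s⟩ := by
    rw [hφ, Complex.liftAux_apply]
    simp [Algebra.algebraMap_eq_smul_one, smul_add, smul_smul, mul_comm]
  letI : SeminormedRing (Matrix (Fin 2) (Fin 2) ℝ) := Matrix.linftyOpSemiNormedRing
  letI : NormedRing (Matrix (Fin 2) (Fin 2) ℝ) := Matrix.linftyOpNormedRing
  letI : NormedAlgebra ℝ (Matrix (Fin 2) (Fin 2) ℝ) := Matrix.linftyOpNormedAlgebra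
  erw [hz, ← NormedSpace.map_exp φ hφc]
  rw [← Complex.exp_eq_exp_ℂ, hφ, Complex.liftAux_apply]
  simp [Complex.exp_re, Complex.exp_im, Algebra.algebraMap_eq_smul_one, smul_add, smul_smul,
    mul_comm]


/-- For `θ = γI + R`, the matrix `θ` is invertible, and
`⟨Λ^θ_t ξ, Rθ⁻¹ξ⟩ = ‖θ⁻¹ξ‖² e^{γt} sin t` for all `ξ` and `t`, where
`‖w‖² = w ⬝ᵥ w` is the squared Euclidean norm. -/
theorem lam_pairing_gammaI_add_rot (γ : ℝ) (θ : Matrix (Fin 2) (Fin 2) ℝ)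
    (hθ : θ = γ • (1 : Matrix (Fin 2) (Fin 2) ℝ) + Rot) :
    IsUnit θ ∧ ∀ (ξ : Fin 2 → ℝ) (t : ℝ),
      (Lam θ t ξ) ⬝ᵥ (Rot *ᵥ (θ⁻¹ *ᵥ ξ)) =
        ((θ⁻¹ *ᵥ ξ) ⬝ᵥ (θ⁻¹ *ᵥ ξ)) * (Real.exp (γ * t) * Real.sin t) := by
  have hc : γ * γ + 1 ≠ 0 := by nlinarith [sq_nonneg γ]
  have hdet : θ.det = γ * γ + 1 := by
    rw [hθ]
    simp [Rot, Matrix.det_fin_two, Matrix.one_apply]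
  have hU : IsUnit θ := by
    rw [Matrix.isUnit_iff_isUnit_det, hdet, isUnit_iff_ne_zero]; exact hc
  refine ⟨hU, fun ξ t => ?_⟩
  -- explicit inverse
  have hinv : θ⁻¹ = (γ * γ + 1)⁻¹ • !![γ, 1; -1, γ] := by
    rw [Matrix.inv_def, hdet, Ring.inverse_eq_inv]
    congr 1
    rw [hθ]
    ext i j
    fin_cases i <;> fin_cases j <;>
      simp [Matrix.adjugate_fin_two, Rot, Matrix.one_apply]
  set w : Fin 2 → ℝ := θ⁻¹ *ᵥ ξ with hw
  set v : Fin 2 → ℝ := Rot *ᵥ w with hv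
  have ha : ξ ⬝ᵥ v = w ⬝ᵥ w := by
    simp only [hv, hw, hinv, Rot, Matrix.smul_mulVec, Matrix.mulVec, dotProduct,
      Fin.sum_univ_two, Matrix.cons_val', Matrix.cons_val_zero, Matrix.cons_val_one,
      Matrix.head_cons, Matrix.head_fin_const, Matrix.empty_val', Matrix.cons_val_fin_one,
      Pi.smul_apply, smul_eq_mul, Matrix.of_apply]
    field_simp
    ring
  have hb : (Rot *ᵥ ξ) ⬝ᵥ v = γ * (w ⬝ᵥ w) := by
    simp only [hv, hw, hinv, Rot, Matrix.smul_mulVec, Matrix.mulVec, dotProduct,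
      Fin.sum_univ_two, Matrix.cons_val', Matrix.cons_val_zero, Matrix.cons_val_one,
      Matrix.head_cons, Matrix.head_fin_const, Matrix.empty_val', Matrix.cons_val_fin_one,
      Pi.smul_apply, smul_eq_mul, Matrix.of_apply]
    field_simp
    ring
  -- rewrite Lam
  have hLam : Lam θ t ξ =
      ∫ s in (0:ℝ)..t, Real.exp (γ * s) • (Real.cos s • ξ + Real.sin s • (Rot *ᵥ ξ)) := by
    unfold Lam
    refine intervalIntegral.integral_congr fun s _ => ?_
    rw [hθ, exp_key]
    simp [Matrix.add_mulVec, Matrix.smul_mulVec, smul_add, Matrix.vecHead, Matrix.vecTail, mul_add]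
  have hcont : Continuous fun s : ℝ =>
      Real.exp (γ * s) • (Real.cos s • ξ + Real.sin s • (Rot *ᵥ ξ)) := by
    fun_prop
  -- dot product as CLM
  let L0 : (Fin 2 → ℝ) →ₗ[ℝ] ℝ :=
    { toFun := fun u => u ⬝ᵥ v
      map_add' := fun x y => add_dotProduct x y v
      map_smul' := fun c x => smul_dotProduct c x v }
  let L : (Fin 2 → ℝ) →L[ℝ] ℝ := LinearMap.toContinuousLinearMap L0
  have hLd : ∀ u, L u = u ⬝ᵥ v := fun u => rfl
  have hdot : (Lam θ t ξ) ⬝ᵥ v =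
      ∫ s in (0:ℝ)..t, Real.exp (γ * s) * (Real.cos s * (ξ ⬝ᵥ v) + Real.sin s * ((Rot *ᵥ ξ) ⬝ᵥ v)) := by
    rw [hLam, ← hLd, ← L.intervalIntegral_comp_comm (hcont.intervalIntegrable _ _)]
    refine intervalIntegral.integral_congr fun s _ => ?_
    simp [hLd, smul_dotProduct, add_dotProduct, mul_add, Matrix.vecHead, Matrix.vecTail]
    ring
  rw [hdot]
  have hftc : ∀ s ∈ Set.uIcc (0:ℝ) t, HasDerivAt
      (fun s => (w ⬝ᵥ w) * (Real.exp (γ * s) * Real.sin s))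
      (Real.exp (γ * s) * (Real.cos s * (ξ ⬝ᵥ v) + Real.sin s * ((Rot *ᵥ ξ) ⬝ᵥ v))) s := by
    intro s _
    have h1 : HasDerivAt (fun s => Real.exp (γ * s)) (γ * Real.exp (γ * s)) s := by
      exact ((Real.hasDerivAt_exp (γ * s)).comp s
        ((hasDerivAt_id s).const_mul γ)).congr_deriv (by simp only [id, mul_one]; ring)
    have h2 := (h1.mul (Real.hasDerivAt_sin s)).const_mul (w ⬝ᵥ w)
    rw [ha, hb]
    exact h2.congr_deriv (by ring)
  rw [intervalIntegral.integral_eq_sub_of_hasDerivAt hftc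
    (by rw [ha, hb]; exact (by fun_prop : Continuous fun s => Real.exp (γ*s) * (Real.cos s * (w ⬝ᵥ w) + Real.sin s * (γ * (w ⬝ᵥ w)))).intervalIntegrable _ _)]
  simp
end

section
/- Let θ be an invertible real 2×2 matrix, ξ ∈ ℝ², t₀ ∈ ℝ, v₀ ∈ ℝ², and u, α ∈ ℝ with uα ≠ 0. Define c : ℝ → ℝ² by c(s) := (1/(uα)) e^{t₀θ} (e^{uαsθ} − uαs·θ − I) θ⁻² ξ + s·Λ^θ_{t₀} ξ + v₀. Then c(0) = v₀ and for every s ∈ ℝ, c is differentiable at s with derivative c'(s) = Λ^θ_{t₀ + uαs} ξ. (Hence c is the second component of the solution of the nilrank-zero linear control system ṫ = uα, v̇ = Λ^θ_t ξ with constant control u starting at (t₀, v₀).) -/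
open Matrix

attribute [local instance] Matrix.linftyOpNormedRing Matrix.linftyOpNormedAlgebra

/-- `M ↦ M *ᵥ w` as a continuous linear map. -/
noncomputable def mulVecCLM (w : Fin 2 → ℝ) :
    Matrix (Fin 2) (Fin 2) ℝ →L[ℝ] (Fin 2 → ℝ) :=
  LinearMap.toContinuousLinearMap
    { toFun := fun M => M *ᵥ w
      map_add' := fun A B => Matrix.add_mulVec A B w
      map_smul' := fun a A => Matrix.smul_mulVec a A w }

lemma mulVecCLM_apply (w : Fin 2 → ℝ) (M : Matrix (Fin 2) (Fin 2) ℝ) :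
    mulVecCLM w M = M *ᵥ w := rfl

lemma hasDerivAt_expvec (θ : Matrix (Fin 2) (Fin 2) ℝ) (ξ : Fin 2 → ℝ) (t : ℝ) :
    HasDerivAt (fun r : ℝ => (NormedSpace.exp (r • θ)) *ᵥ ξ)
      ((NormedSpace.exp (t • θ) * θ) *ᵥ ξ) t := by
  have h := hasDerivAt_exp_smul_const (𝕂 := ℝ) θ t
  exact ((mulVecCLM ξ).hasFDerivAt.comp_hasDerivAt t h :)

lemma Lam_eq (θ : Matrix (Fin 2) (Fin 2) ℝ) (hθ : IsUnit θ) (ξ : Fin 2 → ℝ) (t : ℝ) :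
    Lam θ t ξ = (NormedSpace.exp (t • θ) - 1) *ᵥ (θ⁻¹ *ᵥ ξ) := by
  have hdet : θ * θ⁻¹ = 1 :=
    Matrix.mul_nonsing_inv θ ((Matrix.isUnit_iff_isUnit_det θ).mp hθ)
  have key : ∀ r : ℝ, HasDerivAt
      (fun r : ℝ => (NormedSpace.exp (r • θ) - 1) *ᵥ (θ⁻¹ *ᵥ ξ))
      ((NormedSpace.exp (r • θ)) *ᵥ ξ) r := by
    intro r
    have h := hasDerivAt_exp_smul_const (𝕂 := ℝ) θ r
    have h2 := (h.sub_const 1)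
    have h3 := ((mulVecCLM (θ⁻¹ *ᵥ ξ)).hasFDerivAt.comp_hasDerivAt r h2 :)
    refine h3.congr_deriv (Eq.symm ?_)
    show _ = (NormedSpace.exp (r • θ) * θ) *ᵥ (θ⁻¹ *ᵥ ξ)
    rw [Matrix.mulVec_mulVec, mul_assoc, hdet, mul_one]
  have hcont : Continuous fun s : ℝ => (NormedSpace.exp (s • θ)) *ᵥ ξ := by
    exact (mulVecCLM ξ).continuous.comp
      (NormedSpace.exp_continuous.comp (continuous_id.smul continuous_const))
  have := intervalIntegral.integral_eq_sub_of_hasDerivAt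
    (f := fun r : ℝ => (NormedSpace.exp (r • θ) - 1) *ᵥ (θ⁻¹ *ᵥ ξ))
    (fun x _ => key x) (hcont.intervalIntegrable 0 t)
  rw [Lam, this]
  simp [NormedSpace.exp_zero]

/-- The curve
`c(s) = (1/(uα)) e^{t₀θ}(e^{uαsθ} − uαsθ − I)θ⁻²ξ + s Λ^θ_{t₀} ξ + v₀`
satisfies `c(0) = v₀` and `c'(s) = Λ^θ_{t₀ + uαs} ξ`; i.e. it is the second component of
the solution of the nilrank-zero system `ṫ = uα, v̇ = Λ^θ_t ξ` with constant control `u`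
starting at `(t₀, v₀)`. -/
theorem solution_nilrank_zero (θ : Matrix (Fin 2) (Fin 2) ℝ) (hθ : IsUnit θ)
    (ξ v₀ : Fin 2 → ℝ) (t₀ u α : ℝ) (huα : u * α ≠ 0)
    (c : ℝ → Fin 2 → ℝ)
    (hc : ∀ s : ℝ, c s =
      (1 / (u * α)) • ((NormedSpace.exp (t₀ • θ)) *ᵥ
        ((NormedSpace.exp ((u * α * s) • θ) - (u * α * s) • θ - 1) *ᵥ ((θ⁻¹ ^ 2) *ᵥ ξ)))
      + s • Lam θ t₀ ξ + v₀) :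
    c 0 = v₀ ∧ ∀ s : ℝ, HasDerivAt c (Lam θ (t₀ + u * α * s) ξ) s := by
  have hdet : θ * θ⁻¹ = 1 :=
    Matrix.mul_nonsing_inv θ ((Matrix.isUnit_iff_isUnit_det θ).mp hθ)
  constructor
  · rw [hc 0]
    simp [NormedSpace.exp_zero]
  · intro s
    have hceq : c = fun s : ℝ =>
      (1 / (u * α)) • ((NormedSpace.exp (t₀ • θ)) *ᵥ
        ((NormedSpace.exp ((u * α * s) • θ) - (u * α * s) • θ - 1) *ᵥ ((θ⁻¹ ^ 2) *ᵥ ξ)))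
      + s • Lam θ t₀ ξ + v₀ := funext hc
    set A := NormedSpace.exp (t₀ • θ) with hA
    set E := NormedSpace.exp ((u * α * s) • θ) with hE
    -- derivative of the linear factor
    have h1 : HasDerivAt (fun s : ℝ => u * α * s) (u * α) s := by
      simpa using (hasDerivAt_id s).const_mul (u * α)
    have h2 : HasDerivAt (fun r : ℝ => NormedSpace.exp (r • θ)) (E * θ) (u * α * s) :=
      hasDerivAt_exp_smul_const (𝕂 := ℝ) θ (u * α * s)
    have h3 : HasDerivAt (fun s : ℝ => NormedSpace.exp ((u * α * s) • θ))
        ((u * α) • (E * θ)) s := h2.scomp s h1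
    have h4 : HasDerivAt (fun s : ℝ => (u * α * s) • θ) ((u * α) • θ) s :=
      h1.smul_const θ
    have h5 : HasDerivAt
        (fun s : ℝ => NormedSpace.exp ((u * α * s) • θ) - (u * α * s) • θ - 1)
        ((u * α) • (E * θ) - (u * α) • θ) s := (h3.sub h4).sub_const 1
    have h6 := ((mulVecCLM ((θ⁻¹ ^ 2) *ᵥ ξ)).hasFDerivAt.comp_hasDerivAt s h5 :)
    have h8 : HasDerivAt
        (fun s : ℝ => A *ᵥ ((NormedSpace.exp ((u * α * s) • θ) - (u * α * s) • θ - 1)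
            *ᵥ ((θ⁻¹ ^ 2) *ᵥ ξ)))
        (A *ᵥ (((u * α) • (E * θ) - (u * α) • θ) *ᵥ ((θ⁻¹ ^ 2) *ᵥ ξ))) s := by
      exact ((Matrix.mulVecLin A).toContinuousLinearMap.hasFDerivAt.comp_hasDerivAt s h6 :)
    have h9 := (h8.const_smul (1 / (u * α))).add
      ((hasDerivAt_id s).smul_const (Lam θ t₀ ξ))
    have h10 := h9.add_const v₀
    rw [hceq]
    refine h10.congr_deriv (Eq.symm ?_)
    -- now the algebraic identity
    rw [Lam_eq θ hθ ξ, Lam_eq θ hθ ξ]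
    have hexp : NormedSpace.exp ((t₀ + u * α * s) • θ) = A * E := by
      rw [add_smul]
      exact Matrix.exp_add_of_commute _ _
        (((Commute.refl θ).smul_left t₀).smul_right (u * α * s))
    have hsm : ((u * α) • (E * θ) - (u * α) • θ) = (u * α) • ((E - 1) * θ) := by
      rw [sub_mul, one_mul, smul_sub]
    rw [hexp, hsm, Matrix.smul_mulVec, Matrix.mulVec_smul, smul_smul,
      one_div_mul_cancel huα, one_smul, one_smul]
    simp only [Matrix.mulVec_mulVec]
    rw [← Matrix.add_mulVec]
    refine congrFun (congrArg Matrix.mulVec ?_) ξ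
    have hkey : (E - 1) * θ * θ⁻¹ ^ 2 = (E - 1) * θ⁻¹ := by
      rw [sq, mul_assoc (E - 1) θ, ← mul_assoc θ θ⁻¹ θ⁻¹, hdet, one_mul]
    calc (A * E - 1) * θ⁻¹
        = A * ((E - 1) * θ⁻¹) + (A - 1) * θ⁻¹ := by noncomm_ring
      _ = A * ((E - 1) * θ * θ⁻¹ ^ 2) + (A - 1) * θ⁻¹ := by rw [hkey]
end

section
/- Let γ > 0, ρ > 0 and let k ≥ 1 be an integer. Then there exists s ∈ (2kπ/ρ, (2k+1)π/ρ) such that e^{γρs}(γ sin(ρs) − cos(ρs)) + 1 = 0. -/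
open Real

/-- For `γ > 0`, `ρ > 0` and an integer `k ≥ 1`, the function
`s ↦ e^{γρs}(γ sin(ρs) − cos(ρs)) + 1` has a zero in the interval
`(2kπ/ρ, (2k+1)π/ρ)`. -/
theorem exists_zero_H2 (γ ρ : ℝ) (hγ : 0 < γ) (hρ : 0 < ρ) (k : ℕ) (hk : 1 ≤ k) :
    ∃ s ∈ Set.Ioo (2 * k * π / ρ) ((2 * k + 1) * π / ρ),
      Real.exp (γ * ρ * s) * (γ * Real.sin (ρ * s) - Real.cos (ρ * s)) + 1 = 0 := by
  set f : ℝ → ℝ := fun s => Real.exp (γ * ρ * s) * (γ * Real.sin (ρ * s) - Real.cos (ρ * s)) + 1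
    with hf
  set a : ℝ := 2 * k * π / ρ with ha
  set b : ℝ := (2 * k + 1) * π / ρ with hb
  have hk' : (1:ℝ) ≤ (k:ℝ) := by exact_mod_cast hk
  have hab : a ≤ b := by
    rw [ha, hb, div_le_div_iff₀ hρ hρ]
    nlinarith [pi_pos]
  have hcont : ContinuousOn f (Set.Icc a b) := by fun_prop
  have hra : ρ * a = 2 * k * π := by rw [ha]; field_simp
  have hrb : ρ * b = (2 * k + 1) * π := by rw [hb]; field_simp
  have hfa : f a < 0 := by
    have h1 : Real.sin (ρ * a) = 0 := by
      rw [hra]; simpa [mul_comm, mul_assoc] using Real.sin_nat_mul_pi (2 * k)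
    have h2 : Real.cos (ρ * a) = 1 := by
      rw [hra]
      have : (2 * (k:ℝ)) * π = (k:ℝ) * (2 * π) := by ring
      rw [this]
      simpa using Real.cos_nat_mul_two_pi k
    have h3 : (1:ℝ) < Real.exp (γ * ρ * a) := by
      rw [Real.one_lt_exp_iff]
      have : γ * ρ * a = γ * (ρ * a) := by ring
      rw [this, hra]
      nlinarith [pi_pos, mul_pos hγ pi_pos]
    simp only [hf, h1, h2]
    nlinarith
  have hfb : 0 < f b := by
    have h1 : Real.sin (ρ * b) = 0 := by
      rw [hrb]
      have : ((2:ℝ) * k + 1) * π = ((2 * k + 1 : ℕ) : ℝ) * π := by push_cast; ring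
      rw [this]; exact Real.sin_nat_mul_pi _
    have h2 : Real.cos (ρ * b) = -1 := by
      rw [hrb]
      have heq : ((2:ℝ) * k + 1) * π = (k:ℝ) * (2 * π) + π := by ring
      rw [heq, Real.cos_nat_mul_two_pi_add_pi]
    have h3 : (0:ℝ) < Real.exp (γ * ρ * b) := Real.exp_pos _
    simp only [hf, h1, h2]
    nlinarith
  have := intermediate_value_Ioo hab hcont (a := a) (b := b)
  have h0 : (0:ℝ) ∈ Set.Ioo (f a) (f b) := ⟨hfa, hfb⟩
  obtain ⟨s, hs, hfs⟩ := this h0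
  exact ⟨s, hs, hfs⟩
end
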